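/- Suppose ‖H‖₁ > 0 and that there is a leaf set U(u) ⊆ B_R such that {‖v − u‖₁ : v ∈ U(u)} = [0, d_max(u)] for some d_max(u) > 0, and a finite constant C_U(u) such that for every v ∈ U(u) and every k ∈ ℕ, D_k^{(1)}(u,v) := ∑_{i=0}^{k} ‖Ψ_{t_i}(v) − Ψ_{t_i}(u)‖₁ ≤ C_U(u)·‖v − u‖₁. Suppose q(v) > 0 for every v ∈ U(u). Then for every ε with 0 < ε ≤ d_max(u)·C_U(u)·‖H‖₁ and every k ∈ ℕ, the expected ℓ¹-diameter of S_k satisfies E[diam₁(S_k)] ≥ (1/e)·ε/(C_U(u)·‖H‖₁). -/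

import Mathlib

open MeasureTheory ProbabilityTheory Set
open scoped ENNReal

noncomputable section

/-- The ℓ¹ norm on `ℝ^n`. -/
def norm1 {n : ℕ} (x : EuclideanSpace ℝ (Fin n)) : ℝ := ∑ j, |x j|

/-- The supremum norm on `ℝ^n`. -/
def normInf {n : ℕ} (x : EuclideanSpace ℝ (Fin n)) : ℝ := ⨆ j, |x j|

/-- The operator norm induced by the ℓ¹ norms. -/
def opNorm1 {n m : ℕ} (T : EuclideanSpace ℝ (Fin n) → EuclideanSpace ℝ (Fin m)) : ℝ :=
  sSup ((fun x => norm1 (T x)) '' {x | norm1 x ≤ 1})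

/-- The ℓ¹ diameter of a set. -/
def diam1 {n : ℕ} (S : Set (EuclideanSpace ℝ (Fin n))) : ℝ :=
  sSup ((fun p : EuclideanSpace ℝ (Fin n) × EuclideanSpace ℝ (Fin n) =>
    norm1 (p.1 - p.2)) '' (S ×ˢ S))

/-- The support of the smoothing distribution after observations `Y_0, …, Y_k`. -/
def smootherSupp {d dO : ℕ} {Ω : Type*}
    (Ψ : ℝ → EuclideanSpace ℝ (Fin d) → EuclideanSpace ℝ (Fin d))
    (H : EuclideanSpace ℝ (Fin d) →L[ℝ] EuclideanSpace ℝ (Fin dO))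
    (q : EuclideanSpace ℝ (Fin d) → ℝ) (R h ε : ℝ)
    (u : EuclideanSpace ℝ (Fin d)) (Z : ℕ → Ω → EuclideanSpace ℝ (Fin dO))
    (k : ℕ) (ω : Ω) : Set (EuclideanSpace ℝ (Fin d)) :=
  {x | ‖x‖ ≤ R ∧ 0 < q x ∧
    ∀ i ≤ k, normInf (H (Ψ (i * h) x) - (H (Ψ (i * h) u) + Z i ω)) ≤ ε}

/- ### Auxiliary lemmas -/

lemma norm1_nonneg' {n : ℕ} (x : EuclideanSpace ℝ (Fin n)) : 0 ≤ norm1 x :=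
  Finset.sum_nonneg fun _ _ => abs_nonneg _

lemma abs_le_norm1' {n : ℕ} (x : EuclideanSpace ℝ (Fin n)) (j : Fin n) : |x j| ≤ norm1 x :=
  Finset.single_le_sum (f := fun j => |x j|) (fun _ _ => abs_nonneg _) (Finset.mem_univ j)

lemma abs_le_norm' {n : ℕ} (x : EuclideanSpace ℝ (Fin n)) (j : Fin n) : |x j| ≤ ‖x‖ := by
  rw [EuclideanSpace.norm_eq]
  have h1 : |x j| ^ 2 ≤ ∑ i, ‖x i‖ ^ 2 := by
    refine Finset.single_le_sum (f := fun i => ‖x i‖ ^ 2) (fun i _ => sq_nonneg _)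
      (Finset.mem_univ j) |>.trans_eq' ?_
    simp [Real.norm_eq_abs, sq_abs]
  calc |x j| = Real.sqrt (|x j| ^ 2) := by rw [Real.sqrt_sq (abs_nonneg _)]
  _ ≤ _ := Real.sqrt_le_sqrt h1

lemma norm1_le' {n : ℕ} (x : EuclideanSpace ℝ (Fin n)) : norm1 x ≤ n * ‖x‖ := by
  calc norm1 x ≤ ∑ _j : Fin n, ‖x‖ := Finset.sum_le_sum fun j _ => abs_le_norm' x j
  _ = n * ‖x‖ := by simp [Finset.sum_const, nsmul_eq_mul]

lemma norm_le_norm1' {n : ℕ} (x : EuclideanSpace ℝ (Fin n)) : ‖x‖ ≤ norm1 x := by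
  rw [EuclideanSpace.norm_eq]
  have h1 : ∑ i, ‖x i‖ ^ 2 ≤ (∑ i, ‖x i‖) ^ 2 :=
    Finset.sum_sq_le_sq_sum_of_nonneg (fun i _ => norm_nonneg (x i))
  calc Real.sqrt (∑ i, ‖x i‖ ^ 2) ≤ Real.sqrt ((∑ i, ‖x i‖) ^ 2) := Real.sqrt_le_sqrt h1
  _ = ∑ i, ‖x i‖ := Real.sqrt_sq (Finset.sum_nonneg fun i _ => norm_nonneg _)
  _ = norm1 x := by simp [norm1, Real.norm_eq_abs]

lemma norm1_smul' {n : ℕ} (c : ℝ) (x : EuclideanSpace ℝ (Fin n)) :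
    norm1 (c • x) = |c| * norm1 x := by
  simp only [norm1, Finset.mul_sum]
  refine Finset.sum_congr rfl fun j _ => ?_
  have : (c • x) j = c * x j := rfl
  rw [this, abs_mul]

lemma norm1_pos' {n : ℕ} {x : EuclideanSpace ℝ (Fin n)} (hx : x ≠ 0) : 0 < norm1 x := by
  rcases (lt_or_eq_of_le (norm1_nonneg' x)) with h | h
  · exact h
  · exfalso; apply hx
    have := (Finset.sum_eq_zero_iff_of_nonneg (fun j _ => abs_nonneg (x j))).1 h.symm
    ext j
    simpa using this j (Finset.mem_univ j)

lemma norm1_sub_le' {n : ℕ} (x y : EuclideanSpace ℝ (Fin n)) :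
    norm1 (x - y) ≤ norm1 x + norm1 y := by
  rw [norm1, norm1, norm1, ← Finset.sum_add_distrib]
  refine Finset.sum_le_sum fun j _ => ?_
  have : (x - y) j = x j - y j := rfl
  rw [this]; exact abs_sub _ _

lemma opNorm1_bddAbove' {n m : ℕ} (H : EuclideanSpace ℝ (Fin n) →L[ℝ] EuclideanSpace ℝ (Fin m)) :
    BddAbove ((fun x => norm1 (H x)) '' {x | norm1 x ≤ 1}) := by
  refine ⟨m * ‖H‖, ?_⟩
  rintro _ ⟨x, hx, rfl⟩
  calc norm1 (H x) ≤ m * ‖H x‖ := norm1_le' _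
  _ ≤ m * (‖H‖ * ‖x‖) := mul_le_mul_of_nonneg_left (H.le_opNorm x) (by positivity)
  _ ≤ m * (‖H‖ * 1) := by
      have : ‖x‖ ≤ 1 := (norm_le_norm1' x).trans hx
      gcongr
  _ = m * ‖H‖ := by ring

lemma opNorm1_bound' {n m : ℕ} (H : EuclideanSpace ℝ (Fin n) →L[ℝ] EuclideanSpace ℝ (Fin m))
    (x : EuclideanSpace ℝ (Fin n)) :
    norm1 (H x) ≤ opNorm1 (fun x => H x) * norm1 x := by
  rcases eq_or_ne x 0 with rfl | hx
  · have hz : norm1 (H 0) = 0 := by rw [map_zero]; simp [norm1]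
    have h1 : norm1 (0 : EuclideanSpace ℝ (Fin n)) = 0 := by simp [norm1]
    rw [hz, h1, mul_zero]
  · have hpos := norm1_pos' hx
    set c := (norm1 x)⁻¹ with hc
    have hmem : norm1 (c • x) ≤ 1 := by
      rw [norm1_smul', abs_of_pos (inv_pos.2 hpos), inv_mul_cancel₀ hpos.ne']
    have hle : norm1 (H (c • x)) ≤ opNorm1 (fun x => H x) :=
      le_csSup (opNorm1_bddAbove' H) ⟨c • x, hmem, rfl⟩
    rw [_root_.map_smul, norm1_smul', abs_of_pos (inv_pos.2 hpos)] at hle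
    calc norm1 (H x) = norm1 x * ((norm1 x)⁻¹ * norm1 (H x)) := by field_simp
    _ ≤ norm1 x * opNorm1 (fun x => H x) := mul_le_mul_of_nonneg_left hle hpos.le
    _ = _ := mul_comm _ _

lemma dO_pos' {n m : ℕ} (H : EuclideanSpace ℝ (Fin n) →L[ℝ] EuclideanSpace ℝ (Fin m))
    (hH : 0 < opNorm1 (fun x => H x)) : 0 < m := by
  by_contra hm
  push_neg at hm
  interval_cases m
  have he : (fun x => norm1 (H x)) '' {x | norm1 x ≤ 1} = {0} := by
    apply Set.eq_singleton_iff_nonempty_unique_mem.2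
    constructor
    · exact ⟨0, 0, by simp [Set.mem_setOf_eq, norm1], rfl⟩
    · rintro _ ⟨x, _, rfl⟩; simp [norm1]
  rw [opNorm1, he] at hH
  simp at hH

open Finset in
lemma one_sub_sum_le_prod' {ι : Type*} (s : Finset ι) (a : ι → ℝ)
    (h0 : ∀ i ∈ s, 0 ≤ a i) (h1 : ∀ i ∈ s, a i ≤ 1) :
    1 - ∑ i ∈ s, a i ≤ ∏ i ∈ s, (1 - a i) := by
  induction s using Finset.cons_induction with
  | empty => simp
  | cons i s his ih =>
    rw [Finset.sum_cons, Finset.prod_cons]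
    have h0' : ∀ j ∈ s, 0 ≤ a j := fun j hj => h0 j (Finset.mem_cons_of_mem hj)
    have h1' : ∀ j ∈ s, a j ≤ 1 := fun j hj => h1 j (Finset.mem_cons_of_mem hj)
    have hi0 : 0 ≤ a i := h0 i (Finset.mem_cons_self i s)
    have hi1 : a i ≤ 1 := h1 i (Finset.mem_cons_self i s)
    have hS : 0 ≤ ∑ j ∈ s, a j := Finset.sum_nonneg h0'
    calc 1 - (a i + ∑ j ∈ s, a j)
        ≤ (1 - a i) * (1 - ∑ j ∈ s, a j) := by nlinarith
    _ ≤ (1 - a i) * ∏ j ∈ s, (1 - a j) :=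
        mul_le_mul_of_nonneg_left (ih h0' h1') (by linarith)

lemma exp_neg_two_le' {s : ℝ} (h0 : 0 ≤ s) (h1 : s ≤ 1/2) :
    Real.exp (-(2 * s)) ≤ 1 - s := by
  have he : 1 + 2*s ≤ Real.exp (2*s) := by
    have := Real.add_one_le_exp (2*s); linarith
  have hpos : (0:ℝ) < Real.exp (2*s) := Real.exp_pos _
  rw [Real.exp_neg, inv_le_iff_one_le_mul₀ hpos]
  nlinarith

lemma box_len' {ε w : ℝ} (hw : |w| ≤ 2 * ε) :
    min ε (w + ε) - max (-ε) (w - ε) = 2 * ε - |w| := by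
  rcases le_or_gt 0 w with h | h
  · rw [abs_of_nonneg h] at *
    rw [min_eq_left (by linarith), max_eq_right (by linarith)]
    ring
  · rw [abs_of_neg h] at *
    rw [min_eq_right (by linarith), max_eq_left (by linarith)]
    ring

lemma vol_box' {m : ℕ} (a b : Fin m → ℝ) :
    volume (((MeasurableEquiv.toLp 2 (Fin m → ℝ)).symm) ⁻¹'
      (Set.univ.pi fun j => Icc (a j) (b j))) =
    ∏ j, ENNReal.ofReal (b j - a j) := by
  rw [(EuclideanSpace.volume_preserving_symm_measurableEquiv_toLp (Fin m)).measure_preimage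
    ((MeasurableSet.univ_pi fun j => measurableSet_Icc).nullMeasurableSet)]
  rw [volume_pi_pi]
  simp [Real.volume_Icc]

/-- lower bound on the expected ℓ¹-diameter of the support of the
smoother under the leaf-set assumption, for uniform observation noise. -/
theorem expected_diam_smoother_lower_bound {d dO : ℕ}
    (A : EuclideanSpace ℝ (Fin d) →L[ℝ] EuclideanSpace ℝ (Fin d))
    (B : EuclideanSpace ℝ (Fin d) →L[ℝ] EuclideanSpace ℝ (Fin d) →L[ℝ] EuclideanSpace ℝ (Fin d))
    (f : EuclideanSpace ℝ (Fin d))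
    (R δ : ℝ) (hR : 0 < R) (hδ : 0 < δ)
    (htrap : ∀ x : EuclideanSpace ℝ (Fin d),
      ‖x‖ ∈ Icc R (R + δ) → (inner ℝ (f - A x - B x x) x : ℝ) ≤ 0)
    (Ψ : ℝ → EuclideanSpace ℝ (Fin d) → EuclideanSpace ℝ (Fin d))
    (hΨ0 : ∀ x, ‖x‖ ≤ R → Ψ 0 x = x)
    (hΨR : ∀ x, ‖x‖ ≤ R → ∀ t : ℝ, 0 ≤ t → ‖Ψ t x‖ ≤ R)
    (hΨode : ∀ x, ‖x‖ ≤ R → ∀ t : ℝ, 0 ≤ t →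
      HasDerivWithinAt (fun s => Ψ s x)
        (f - A (Ψ t x) - B (Ψ t x) (Ψ t x)) (Ici 0) t)
    (h : ℝ) (hh : 0 < h)
    (H : EuclideanSpace ℝ (Fin d) →L[ℝ] EuclideanSpace ℝ (Fin dO))
    (hH : 0 < opNorm1 (fun x : EuclideanSpace ℝ (Fin d) => H x))
    (ε : ℝ) (hε : 0 < ε)
    (Ω : Type*) [MeasurableSpace Ω] (μ : Measure Ω) [IsProbabilityMeasure μ]
    (Z : ℕ → Ω → EuclideanSpace ℝ (Fin dO))
    (hZmeas : ∀ i, Measurable (Z i))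
    (hZindep : iIndepFun Z μ)
    (hZlaw : ∀ i, Measure.map (Z i) μ =
      (ENNReal.ofReal ((2 * ε) ^ dO))⁻¹ •
        volume.restrict {z : EuclideanSpace ℝ (Fin dO) | ∀ j, |z j| ≤ ε})
    (q : EuclideanSpace ℝ (Fin d) → ℝ) (hq : ∀ x, 0 ≤ q x)
    (hqsupp : ∀ x : EuclideanSpace ℝ (Fin d), ¬ ‖x‖ ≤ R → q x = 0)
    (u : EuclideanSpace ℝ (Fin d)) (hu : ‖u‖ ≤ R) (hqu : 0 < q u)
    -- Assumption 2 (leaf set):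
    (U : Set (EuclideanSpace ℝ (Fin d)))
    (hUsub : U ⊆ {x : EuclideanSpace ℝ (Fin d) | ‖x‖ ≤ R})
    (dmax : ℝ) (hdmax : 0 < dmax)
    (hUrange : (fun v => norm1 (v - u)) '' U = Icc 0 dmax)
    (CU : ℝ)
    (hCU : ∀ v ∈ U, ∀ k : ℕ,
      ∑ i ∈ Finset.range (k + 1), norm1 (Ψ (i * h) v - Ψ (i * h) u) ≤ CU * norm1 (v - u))
    (hqU : ∀ v ∈ U, 0 < q v)
    (hεub : ε ≤ dmax * CU * opNorm1 (fun x : EuclideanSpace ℝ (Fin d) => H x)) :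
    ∀ k : ℕ,
      ENNReal.ofReal ((1 / Real.exp 1) *
          ε / (CU * opNorm1 (fun x : EuclideanSpace ℝ (Fin d) => H x))) ≤
        ∫⁻ ω, ENNReal.ofReal (diam1 (smootherSupp Ψ H q R h ε u Z k ω)) ∂μ := by
  intro k
  set N := opNorm1 (fun x : EuclideanSpace ℝ (Fin d) => H x) with hNdef
  have hNpos : 0 < N := hH
  have hdOpos : 0 < dO := dO_pos' H hH
  have : Nonempty (Fin dO) := Fin.pos_iff_nonempty.1 hdOpos
  -- CU ≥ 1
  obtain ⟨v0, hv0U, hv0⟩ : ∃ v0 ∈ U, norm1 (v0 - u) = dmax := by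
    have hm : dmax ∈ Icc (0:ℝ) dmax := ⟨hdmax.le, le_refl _⟩
    rw [← hUrange] at hm
    obtain ⟨v0, h1, h2⟩ := hm
    exact ⟨v0, h1, h2⟩
  have hCU1 : 1 ≤ CU := by
    have hc := hCU v0 hv0U 0
    rw [Finset.sum_range_one] at hc
    rw [show ((0:ℕ):ℝ) * h = 0 by simp, hΨ0 v0 (hUsub hv0U), hΨ0 u hu, hv0] at hc
    nlinarith
  have hCUpos : 0 < CU := lt_of_lt_of_le one_pos hCU1
  set c := ε / (CU * N) with hcdef
  have hcpos : 0 < c := div_pos hε (mul_pos hCUpos hNpos)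
  have hcle : c ≤ dmax := by
    rw [hcdef, div_le_iff₀ (mul_pos hCUpos hNpos)]
    nlinarith
  obtain ⟨v, hvU, hvc⟩ : ∃ v ∈ U, norm1 (v - u) = c := by
    have hm : c ∈ Icc (0:ℝ) dmax := ⟨hcpos.le, hcle⟩
    rw [← hUrange] at hm
    obtain ⟨v, h1, h2⟩ := hm
    exact ⟨v, h1, h2⟩
  -- the differences of observed signals
  set w : ℕ → EuclideanSpace ℝ (Fin dO) :=
    fun i => H (Ψ (i * h) v) - H (Ψ (i * h) u) with hwdef
  have hwsum : ∑ i ∈ Finset.range (k+1), norm1 (w i) ≤ ε := by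
    calc ∑ i ∈ Finset.range (k+1), norm1 (w i)
        ≤ ∑ i ∈ Finset.range (k+1), N * norm1 (Ψ (i*h) v - Ψ (i*h) u) := by
          refine Finset.sum_le_sum fun i _ => ?_
          have : w i = H (Ψ (i*h) v - Ψ (i*h) u) := by rw [hwdef]; simp [map_sub]
          rw [this]
          exact opNorm1_bound' H _
    _ = N * ∑ i ∈ Finset.range (k+1), norm1 (Ψ (i*h) v - Ψ (i*h) u) := by
          rw [Finset.mul_sum]
    _ ≤ N * (CU * norm1 (v - u)) :=
          mul_le_mul_of_nonneg_left (hCU v hvU k) hNpos.le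
    _ = ε := by rw [hvc, hcdef]; field_simp
  have hwnn : ∀ i, 0 ≤ norm1 (w i) := fun i => norm1_nonneg' _
  have hwle : ∀ i ∈ Finset.range (k+1), norm1 (w i) ≤ ε := by
    intro i hi
    refine le_trans ?_ hwsum
    exact Finset.single_le_sum (f := fun i => norm1 (w i)) (fun j _ => hwnn j) hi
  -- the good-noise boxes
  set Abox : ℕ → Set (EuclideanSpace ℝ (Fin dO)) := fun i =>
    ((MeasurableEquiv.toLp 2 (Fin dO → ℝ)).symm) ⁻¹'
      (Set.univ.pi fun j => Icc (max (-ε) (w i j - ε)) (min ε (w i j + ε))) with hAdef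
  have hAmeas : ∀ i, MeasurableSet (Abox i) := fun i =>
    (MeasurableEquiv.toLp 2 (Fin dO → ℝ)).symm.measurable
      (MeasurableSet.univ_pi fun j => measurableSet_Icc)
  have hAmem : ∀ i (z : EuclideanSpace ℝ (Fin dO)), z ∈ Abox i ↔
      ∀ j, max (-ε) (w i j - ε) ≤ z j ∧ z j ≤ min ε (w i j + ε) := by
    intro i z
    rw [hAdef]
    simp only [Set.mem_preimage, Set.mem_univ_pi]
    rfl
  set E := ⋂ i ∈ Finset.range (k+1), Z i ⁻¹' Abox i with hEdef
  have hEmeas : MeasurableSet E :=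
    MeasurableSet.biInter (Finset.range (k+1)).countable_toSet
      fun i _ => (hZmeas i) (hAmeas i)
  -- on E both u and v are in the support
  have hdiam : ∀ ω ∈ E, c ≤ diam1 (smootherSupp Ψ H q R h ε u Z k ω) := by
    intro ω hω
    have hZbox : ∀ i ≤ k, ∀ j, max (-ε) (w i j - ε) ≤ Z i ω j ∧ Z i ω j ≤ min ε (w i j + ε) := by
      intro i hi j
      have : ω ∈ Z i ⁻¹' Abox i := by
        have := Set.mem_iInter₂.1 hω i (Finset.mem_range_succ_iff.2 hi)
        exact this
      exact (hAmem i (Z i ω)).1 this j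
    have huS : u ∈ smootherSupp Ψ H q R h ε u Z k ω := by
      refine ⟨hu, hqu, fun i hi => ?_⟩
      refine ciSup_le fun j => ?_
      have hcoord : (H (Ψ (↑i * h) u) - (H (Ψ (↑i * h) u) + Z i ω)) j
          = -(Z i ω j) := by
        show H (Ψ (↑i * h) u) j - (H (Ψ (↑i * h) u) j + Z i ω j) = -(Z i ω j)
        ring
      rw [hcoord, abs_neg, abs_le]
      obtain ⟨h1, h2⟩ := hZbox i hi j
      constructor
      · linarith [le_max_left (-ε) (w i j - ε)]
      · linarith [min_le_left ε (w i j + ε)]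
    have hvS : v ∈ smootherSupp Ψ H q R h ε u Z k ω := by
      refine ⟨hUsub hvU, hqU v hvU, fun i hi => ?_⟩
      refine ciSup_le fun j => ?_
      have hcoord : (H (Ψ (↑i * h) v) - (H (Ψ (↑i * h) u) + Z i ω)) j
          = w i j - Z i ω j := by
        show H (Ψ (↑i * h) v) j - (H (Ψ (↑i * h) u) j + Z i ω j)
          = (H (Ψ (↑i * h) v) j - H (Ψ (↑i * h) u) j) - Z i ω j
        ring
      rw [hcoord, abs_le]
      obtain ⟨h1, h2⟩ := hZbox i hi j
      constructor
      · linarith [min_le_right ε (w i j + ε)]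
      · linarith [le_max_right (-ε) (w i j - ε)]
    -- bounded above
    have hbdd : BddAbove ((fun p : EuclideanSpace ℝ (Fin d) × EuclideanSpace ℝ (Fin d) =>
        norm1 (p.1 - p.2)) '' ((smootherSupp Ψ H q R h ε u Z k ω) ×ˢ
          (smootherSupp Ψ H q R h ε u Z k ω))) := by
      refine ⟨2 * d * R, ?_⟩
      rintro _ ⟨p, ⟨hp1, hp2⟩, rfl⟩
      calc norm1 (p.1 - p.2) ≤ norm1 p.1 + norm1 p.2 := norm1_sub_le' _ _
      _ ≤ d * ‖p.1‖ + d * ‖p.2‖ := add_le_add (norm1_le' _) (norm1_le' _)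
      _ ≤ d * R + d * R := by
          have h1 : ‖p.1‖ ≤ R := hp1.1
          have h2 : ‖p.2‖ ≤ R := hp2.1
          gcongr
      _ = 2 * d * R := by ring
    calc c = norm1 (v - u) := hvc.symm
    _ ≤ diam1 (smootherSupp Ψ H q R h ε u Z k ω) :=
        le_csSup hbdd ⟨(v, u), ⟨hvS, huS⟩, rfl⟩
  -- probability of E
  have hPE : ENNReal.ofReal (Real.exp (-1)) ≤ μ E := by
    rw [hEdef, hZindep.measure_inter_preimage_eq_mul (Finset.range (k+1))
      (fun i _ => hAmeas i)]
    have hstep : ∀ i ∈ Finset.range (k+1),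
        ENNReal.ofReal (Real.exp (-(norm1 (w i) / ε))) ≤ μ (Z i ⁻¹' Abox i) := by
      intro i hi
      have hwiε : norm1 (w i) ≤ ε := hwle i hi
      have hwij : ∀ j, |w i j| ≤ 2 * ε := fun j =>
        (abs_le_norm1' (w i) j).trans (hwiε.trans (by linarith))
      have hmap : μ (Z i ⁻¹' Abox i) = (Measure.map (Z i) μ) (Abox i) :=
        (Measure.map_apply (hZmeas i) (hAmeas i)).symm
      have hsub : Abox i ⊆ {z : EuclideanSpace ℝ (Fin dO) | ∀ j, |z j| ≤ ε} := by
        intro z hz j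
        obtain ⟨h1, h2⟩ := (hAmem i z).1 hz j
        rw [abs_le]
        exact ⟨le_trans (le_max_left _ _) h1, le_trans h2 (min_le_left _ _)⟩
      have hvol : volume (Abox i) = ENNReal.ofReal (∏ j, (2 * ε - |w i j|)) := by
        rw [hAdef]
        rw [vol_box']
        rw [ENNReal.ofReal_prod_of_nonneg (fun j _ => by
          have := hwij j; have := abs_nonneg (w i j); linarith)]
        refine Finset.prod_congr rfl fun j _ => ?_
        rw [box_len' (hwij j)]
      rw [hmap, hZlaw i, Measure.smul_apply, smul_eq_mul,
        Measure.restrict_apply (hAmeas i), Set.inter_eq_self_of_subset_left hsub, hvol]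
      have h2ε : (0:ℝ) < (2 * ε) ^ dO := pow_pos (by linarith) _
      rw [← ENNReal.ofReal_inv_of_pos h2ε, ← ENNReal.ofReal_mul (inv_nonneg.2 h2ε.le)]
      apply ENNReal.ofReal_le_ofReal
      -- real inequality
      have hprodeq : ((2 * ε) ^ dO)⁻¹ * ∏ j, (2 * ε - |w i j|)
          = ∏ j : Fin dO, (1 - |w i j| / (2 * ε)) := by
        rw [← Fin.prod_const dO (2 * ε), ← Finset.prod_inv_distrib,
          ← Finset.prod_mul_distrib]
        refine Finset.prod_congr rfl fun j _ => ?_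
        field_simp
      rw [hprodeq]
      have hsum : ∑ j : Fin dO, |w i j| / (2 * ε) = norm1 (w i) / (2 * ε) := by
        rw [norm1, Finset.sum_div]
      calc Real.exp (-(norm1 (w i) / ε))
          = Real.exp (-(2 * (norm1 (w i) / (2 * ε)))) := by
            congr 1; field_simp
      _ ≤ 1 - norm1 (w i) / (2 * ε) := by
            apply exp_neg_two_le'
            · exact div_nonneg (hwnn i) (by linarith)
            · rw [div_le_iff₀ (by linarith : (0:ℝ) < 2 * ε)]; linarith
      _ = 1 - ∑ j : Fin dO, |w i j| / (2 * ε) := by rw [hsum]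
      _ ≤ ∏ j : Fin dO, (1 - |w i j| / (2 * ε)) := by
            apply one_sub_sum_le_prod'
            · intro j _; exact div_nonneg (abs_nonneg _) (by linarith)
            · intro j _
              rw [div_le_one (by linarith : (0:ℝ) < 2 * ε)]
              exact hwij j
    calc ENNReal.ofReal (Real.exp (-1))
        ≤ ENNReal.ofReal (Real.exp (-((∑ i ∈ Finset.range (k+1), norm1 (w i)) / ε))) := by
          apply ENNReal.ofReal_le_ofReal
          apply Real.exp_le_exp.2
          rw [neg_le_neg_iff, div_le_one hε]
          exact hwsum
    _ = ∏ i ∈ Finset.range (k+1), ENNReal.ofReal (Real.exp (-(norm1 (w i) / ε))) := by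
          rw [← ENNReal.ofReal_prod_of_nonneg (fun i _ => (Real.exp_pos _).le)]
          congr 1
          rw [← Real.exp_sum]
          congr 1
          rw [Finset.sum_div, ← Finset.sum_neg_distrib]
    _ ≤ ∏ i ∈ Finset.range (k+1), μ (Z i ⁻¹' Abox i) :=
          Finset.prod_le_prod' hstep
  -- conclude
  calc ENNReal.ofReal ((1 / Real.exp 1) * ε / (CU * N))
      = ENNReal.ofReal c * ENNReal.ofReal (Real.exp (-1)) := by
        rw [← ENNReal.ofReal_mul hcpos.le]
        congr 1
        rw [Real.exp_neg, hcdef]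
        ring
  _ ≤ ENNReal.ofReal c * μ E := mul_le_mul_right hPE _
  _ = ∫⁻ ω, E.indicator (fun _ => ENNReal.ofReal c) ω ∂μ := by
        rw [lintegral_indicator hEmeas, setLIntegral_const]
  _ ≤ ∫⁻ ω, ENNReal.ofReal (diam1 (smootherSupp Ψ H q R h ε u Z k ω)) ∂μ := by
        apply lintegral_mono
        intro ω
        by_cases hω : ω ∈ E
        · rw [Set.indicator_of_mem hω]
          exact ENNReal.ofReal_le_ofReal (hdiam ω hω)
        · rw [Set.indicator_of_notMem hω]
          exact zero_le
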